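/- Let W be a weak fundamental localizer. The class of W-exact squares in Cat is stable under horizontal and vertical composition: if D' (with 2-cell α' : u' ∘ v' ⟶ w' ∘ u'') and D (with α : u ∘ v ⟶ w ∘ u') are horizontally composable squares that are both W-exact, then their horizontal composite D ∘h D' (with 2-cell (w ★ α')(α ★ v') : u ∘ (v ∘ v') ⟶ (w ∘ w') ∘ u'') is W-exact; and similarly for vertical composition. -/

import Mathlib

open CategoryTheory

universe u

namespace Paper

/-- A class of functors between small categories. -/
abbrev FunctorClass : Type (u + 1) :=
  ∀ ⦃A B : Type u⦄ [SmallCategory A] [SmallCategory B], (A ⥤ B) → Prop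

/-- The punctual category `e`. -/
abbrev PtCat : Type u := Discrete PUnit.{u + 1}

/-- The category `A` is `W`-aspherical: the functor `A ⥤ e` lies in `W`. -/
def IsAsphericalCat (W : FunctorClass.{u}) (A : Type u) [SmallCategory A] : Prop :=
  W (Functor.star A)

/-- The functor `F : A ⥤ B` is `W`-aspherical: every comma category `A/b` is `W`-aspherical. -/
def IsAsphericalFunctor (W : FunctorClass.{u}) {A B : Type u} [SmallCategory A]
    [SmallCategory B] (F : A ⥤ B) : Prop :=
  ∀ b : B, IsAsphericalCat W (CostructuredArrow F b)

/-- The functor `F : A ⥤ B` is `W`-coaspherical: every comma category `b\A` is `W`-aspherical. -/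
def IsCoasphericalFunctor (W : FunctorClass.{u}) {A B : Type u} [SmallCategory A]
    [SmallCategory B] (F : A ⥤ B) : Prop :=
  ∀ b : B, IsAsphericalCat W (StructuredArrow b F)

/-- For `F : A ⥤ B` and `b : B`, the induced functor `A/b ⥤ B/b`. -/
def sliceInduced {A B : Type u} [SmallCategory A] [SmallCategory B] (F : A ⥤ B) (b : B) :
    CostructuredArrow F b ⥤ Over b where
  obj x := Over.mk x.hom
  map {x y} f := Over.homMk (F.map f.left) (by simp [CostructuredArrow.w f])

/-- For a strictly commutative triangle given by `F : A ⥤ B`, `G : B ⥤ C` and `c : C`,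
the induced functor `A/c ⥤ B/c`. -/
def triangleSlice {A B C : Type u} [SmallCategory A] [SmallCategory B] [SmallCategory C]
    (F : A ⥤ B) (G : B ⥤ C) (c : C) :
    CostructuredArrow (F ⋙ G) c ⥤ CostructuredArrow G c where
  obj x := CostructuredArrow.mk (Y := F.obj x.left) x.hom
  map {x y} f := CostructuredArrow.homMk (F.map f.left) (CostructuredArrow.w f)

/-- For a strictly commutative triangle given by `F : A ⥤ B`, `G : B ⥤ C` and `c : C`,
the induced functor `c\A ⥤ c\B`. -/
def triangleCoslice {A B C : Type u} [SmallCategory A] [SmallCategory B] [SmallCategory C]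
    (F : A ⥤ B) (G : B ⥤ C) (c : C) :
    StructuredArrow c (F ⋙ G) ⥤ StructuredArrow c G where
  obj x := StructuredArrow.mk (Y := F.obj x.right) x.hom
  map {x y} f := StructuredArrow.homMk (F.map f.right) (StructuredArrow.w f)


/-- `W` is a weak fundamental localizer. -/
structure IsWeakFundamentalLocalizer (W : FunctorClass.{u}) : Prop where
  id_mem : ∀ (A : Type u) [SmallCategory A], W (𝟭 A)
  comp_mem : ∀ {A B C : Type u} [SmallCategory A] [SmallCategory B] [SmallCategory C]
      (F : A ⥤ B) (G : B ⥤ C), W F → W G → W (F ⋙ G)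
  of_comp_left : ∀ {A B C : Type u} [SmallCategory A] [SmallCategory B] [SmallCategory C]
      (F : A ⥤ B) (G : B ⥤ C), W F → W (F ⋙ G) → W G
  of_comp_right : ∀ {A B C : Type u} [SmallCategory A] [SmallCategory B] [SmallCategory C]
      (F : A ⥤ B) (G : B ⥤ C), W G → W (F ⋙ G) → W F
  retract_mem : ∀ {A A' : Type u} [SmallCategory A] [SmallCategory A']
      (i : A' ⥤ A) (r : A ⥤ A'), i ⋙ r = 𝟭 A' → W (r ⋙ i) → W r
  star_mem : ∀ (A : Type u) [SmallCategory A], Limits.HasTerminal A → W (Functor.star A)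
  mem_of_slices : ∀ {A B : Type u} [SmallCategory A] [SmallCategory B] (F : A ⥤ B),
      (∀ b : B, W (sliceInduced F b)) → W F

/-- `W` is a fundamental localizer. -/
structure IsFundamentalLocalizer (W : FunctorClass.{u}) : Prop where
  id_mem : ∀ (A : Type u) [SmallCategory A], W (𝟭 A)
  comp_mem : ∀ {A B C : Type u} [SmallCategory A] [SmallCategory B] [SmallCategory C]
      (F : A ⥤ B) (G : B ⥤ C), W F → W G → W (F ⋙ G)
  of_comp_left : ∀ {A B C : Type u} [SmallCategory A] [SmallCategory B] [SmallCategory C]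
      (F : A ⥤ B) (G : B ⥤ C), W F → W (F ⋙ G) → W G
  of_comp_right : ∀ {A B C : Type u} [SmallCategory A] [SmallCategory B] [SmallCategory C]
      (F : A ⥤ B) (G : B ⥤ C), W G → W (F ⋙ G) → W F
  retract_mem : ∀ {A A' : Type u} [SmallCategory A] [SmallCategory A']
      (i : A' ⥤ A) (r : A ⥤ A'), i ⋙ r = 𝟭 A' → W (r ⋙ i) → W r
  star_mem : ∀ (A : Type u) [SmallCategory A], Limits.HasTerminal A → W (Functor.star A)
  mem_of_rel_slices : ∀ {A B C : Type u} [SmallCategory A] [SmallCategory B] [SmallCategory C]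
      (F : A ⥤ B) (G : B ⥤ C), (∀ c : C, W (triangleSlice F G c)) → W F


section Squares

variable {A A' B B' : Type u} [SmallCategory A] [SmallCategory A']
  [SmallCategory B] [SmallCategory B']

/-- The functor `A'/b' ⥤ A/w(b')` induced by a square `(u, u', v, w, α)`. -/
def squareSlice (u : A ⥤ B) (u' : A' ⥤ B') (v : A' ⥤ A) (w : B' ⥤ B)
    (α : v ⋙ u ⟶ u' ⋙ w) (b' : B') :
    CostructuredArrow u' b' ⥤ CostructuredArrow u (w.obj b') where
  obj x := CostructuredArrow.mk (Y := v.obj x.left) (α.app x.left ≫ w.map x.hom)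
  map {x y} f := CostructuredArrow.homMk (v.map f.left) (by
    have h := α.naturality f.left
    dsimp at h ⊢
    rw [← Category.assoc, h, Category.assoc, ← Functor.map_comp, CostructuredArrow.w f])

/-- The functor `a\A' ⥤ u(a)\B'` induced by a square `(u, u', v, w, α)`. -/
def squareCoslice (u : A ⥤ B) (u' : A' ⥤ B') (v : A' ⥤ A) (w : B' ⥤ B)
    (α : v ⋙ u ⟶ u' ⋙ w) (a : A) :
    StructuredArrow a v ⥤ StructuredArrow (u.obj a) w where
  obj x := StructuredArrow.mk (Y := u'.obj x.right) (u.map x.hom ≫ α.app x.right)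
  map {x y} f := StructuredArrow.homMk (u'.map f.right) (by
    have h := α.naturality f.right
    dsimp at h ⊢
    rw [Category.assoc, ← h, ← Category.assoc, ← Functor.map_comp, StructuredArrow.w f])

/-- The category `A'_{(a, b', g)}` attached to a square `(u, u', v, w, α)` and a triple
`(a, b', g : u(a) ⟶ w(b'))`. -/
structure SquareFiber (u : A ⥤ B) (u' : A' ⥤ B') (v : A' ⥤ A) (w : B' ⥤ B)
    (α : v ⋙ u ⟶ u' ⋙ w) (a : A) (b' : B') (g : u.obj a ⟶ w.obj b') : Type u where
  pt : A'
  f : a ⟶ v.obj pt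
  g' : u'.obj pt ⟶ b'
  fac : u.map f ≫ α.app pt ≫ w.map g' = g

instance (u : A ⥤ B) (u' : A' ⥤ B') (v : A' ⥤ A) (w : B' ⥤ B)
    (α : v ⋙ u ⟶ u' ⋙ w) (a : A) (b' : B') (g : u.obj a ⟶ w.obj b') :
    Category (SquareFiber u u' v w α a b' g) where
  Hom x y := { h : x.pt ⟶ y.pt // x.f ≫ v.map h = y.f ∧ u'.map h ≫ y.g' = x.g' }
  id x := ⟨𝟙 x.pt, by simp, by simp⟩
  comp {x y z} f g := ⟨f.1 ≫ g.1, by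
      rw [Functor.map_comp, ← Category.assoc, f.2.1, g.2.1], by
      rw [Functor.map_comp, Category.assoc, g.2.2, f.2.2]⟩
  id_comp f := by apply Subtype.ext; simp
  comp_id f := by apply Subtype.ext; simp
  assoc f g h := by apply Subtype.ext; simp

/-- A square `(u, u', v, w, α)` is `W`-exact. -/
def IsExactSquare (W : FunctorClass.{u}) (u : A ⥤ B) (u' : A' ⥤ B') (v : A' ⥤ A)
    (w : B' ⥤ B) (α : v ⋙ u ⟶ u' ⋙ w) : Prop :=
  ∀ b' : B', IsCoasphericalFunctor W (squareSlice u u' v w α b')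

/-- The 2-cell of the opposite square. -/
def squareOpCell (u : A ⥤ B) (u' : A' ⥤ B') (v : A' ⥤ A) (w : B' ⥤ B)
    (α : v ⋙ u ⟶ u' ⋙ w) : u'.op ⋙ w.op ⟶ v.op ⋙ u.op :=
  NatTrans.op α

end Squares

section Comps

/-- The 2-cell of the horizontal composite of two squares. -/
def hcomp2cell {A A' A'' B B' B'' : Type u}
    [SmallCategory A] [SmallCategory A'] [SmallCategory A'']
    [SmallCategory B] [SmallCategory B'] [SmallCategory B'']
    {u : A ⥤ B} {u' : A' ⥤ B'} {u'' : A'' ⥤ B''}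
    {v : A' ⥤ A} {w : B' ⥤ B} {v' : A'' ⥤ A'} {w' : B'' ⥤ B'}
    (α : v ⋙ u ⟶ u' ⋙ w) (α' : v' ⋙ u' ⟶ u'' ⋙ w') :
    (v' ⋙ v) ⋙ u ⟶ u'' ⋙ (w' ⋙ w) :=
  Functor.whiskerLeft v' α ≫ Functor.whiskerRight α' w

/-- The 2-cell of the vertical composite of two squares. -/
def vcomp2cell {A A' B B' C C' : Type u}
    [SmallCategory A] [SmallCategory A'] [SmallCategory B] [SmallCategory B']
    [SmallCategory C] [SmallCategory C']
    {u : A ⥤ B} {u' : A' ⥤ B'} {v : A' ⥤ A} {w : B' ⥤ B}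
    {x : B ⥤ C} {x' : B' ⥤ C'} {y : C' ⥤ C}
    (α : v ⋙ u ⟶ u' ⋙ w) (β : w ⋙ x ⟶ x' ⋙ y) :
    v ⋙ (u ⋙ x) ⟶ (u' ⋙ x') ⋙ y :=
  Functor.whiskerRight α x ≫ Functor.whiskerLeft u' β

end Comps

section Fibers

variable {A B : Type u} [SmallCategory A] [SmallCategory B]

/-- The fiber `A_b` of `F : A ⥤ B` at `b : B`. -/
structure CatFiber (F : A ⥤ B) (b : B) : Type u where
  obj : A
  eq : F.obj obj = b

instance (F : A ⥤ B) (b : B) : Category (CatFiber F b) where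
  Hom x y := { f : x.obj ⟶ y.obj // F.map f = eqToHom (x.eq.trans y.eq.symm) }
  id x := ⟨𝟙 x.obj, by simp⟩
  comp {x y z} f g := ⟨f.1 ≫ g.1, by rw [Functor.map_comp, f.2, g.2, eqToHom_trans]⟩
  id_comp f := by apply Subtype.ext; simp
  comp_id f := by apply Subtype.ext; simp
  assoc f g h := by apply Subtype.ext; simp

/-- The canonical functor `A_b ⥤ A/b`. -/
def fiberToSlice (F : A ⥤ B) (b : B) : CatFiber F b ⥤ CostructuredArrow F b where
  obj x := CostructuredArrow.mk (Y := x.obj) (eqToHom x.eq)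
  map {x y} f := CostructuredArrow.homMk f.1 (by simp [f.2])

/-- The canonical functor `A_b ⥤ b\A`. -/
def fiberToCoslice (F : A ⥤ B) (b : B) : CatFiber F b ⥤ StructuredArrow b F where
  obj x := StructuredArrow.mk (Y := x.obj) (eqToHom x.eq.symm)
  map {x y} f := StructuredArrow.homMk f.1 (by simp [f.2])

/-- The functor `F` is `W`-proper. -/
def IsProper (W : FunctorClass.{u}) (F : A ⥤ B) : Prop :=
  ∀ b : B, IsCoasphericalFunctor W (fiberToSlice F b)

/-- The functor `F` is `W`-smooth. -/
def IsSmooth (W : FunctorClass.{u}) (F : A ⥤ B) : Prop :=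
  ∀ b : B, IsAsphericalFunctor W (fiberToCoslice F b)

/-- The functor `F` is a precofibration: each canonical functor `A_b ⥤ A/b` admits a left
adjoint. -/
def IsPrecofibration (F : A ⥤ B) : Prop :=
  ∀ b : B, (fiberToSlice F b).IsRightAdjoint

end Fibers

/-- `F` is an isomorphism of categories. -/
def IsCatIso {A B : Type u} [SmallCategory A] [SmallCategory B] (F : A ⥤ B) : Prop :=
  ∃ G : B ⥤ A, F ⋙ G = 𝟭 A ∧ G ⋙ F = 𝟭 B

section Pullback

variable {A B B' : Type u} [SmallCategory A] [SmallCategory B] [SmallCategory B']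

/-- The strict pullback `B' ×_B A` of `u : A ⥤ B` and `w : B' ⥤ B`. -/
structure CatPullback (u : A ⥤ B) (w : B' ⥤ B) : Type u where
  fst : B'
  snd : A
  eq : w.obj fst = u.obj snd

instance (u : A ⥤ B) (w : B' ⥤ B) : Category (CatPullback u w) where
  Hom x y := { p : (x.fst ⟶ y.fst) × (x.snd ⟶ y.snd) //
    w.map p.1 ≫ eqToHom y.eq = eqToHom x.eq ≫ u.map p.2 }
  id x := ⟨(𝟙 x.fst, 𝟙 x.snd), by simp⟩
  comp {x y z} f g := ⟨(f.1.1 ≫ g.1.1, f.1.2 ≫ g.1.2), by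
    rw [Functor.map_comp, Functor.map_comp, Category.assoc, g.2, ← Category.assoc, f.2,
      Category.assoc]⟩
  id_comp f := by apply Subtype.ext; simp
  comp_id f := by apply Subtype.ext; simp
  assoc f g h := by apply Subtype.ext; simp

/-- First projection of the strict pullback. -/
def pbFst (u : A ⥤ B) (w : B' ⥤ B) : CatPullback u w ⥤ B' where
  obj x := x.fst
  map f := f.1.1

/-- Second projection of the strict pullback. -/
def pbSnd (u : A ⥤ B) (w : B' ⥤ B) : CatPullback u w ⥤ A where
  obj x := x.snd
  map f := f.1.2

theorem pb_comm (u : A ⥤ B) (w : B' ⥤ B) : pbSnd u w ⋙ u = pbFst u w ⋙ w := by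
  have hobj : ∀ x : CatPullback u w, (pbSnd u w ⋙ u).obj x = (pbFst u w ⋙ w).obj x :=
    fun x => x.eq.symm
  refine CategoryTheory.Functor.ext hobj (fun x y f => ?_)
  have h := f.2
  dsimp only [Functor.comp_map, pbFst, pbSnd]
  rw [h]
  simp
  erw [eqToHom_trans_assoc, eqToHom_refl, Category.id_comp]

/-- The comparison functor from the top-left corner of a commutative square to the
strict pullback. -/
def toPullback {A' : Type u} [SmallCategory A'] (u : A ⥤ B) (u' : A' ⥤ B') (v : A' ⥤ A)
    (w : B' ⥤ B) (h : v ⋙ u = u' ⋙ w) : A' ⥤ CatPullback u w where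
  obj a' := ⟨u'.obj a', v.obj a', (Functor.congr_obj h a').symm⟩
  map {x y} f := ⟨(u'.map f, v.map f), by
    have := Functor.congr_hom h f
    dsimp at this
    rw [this]
    simp⟩
  map_id x := by
    apply Subtype.ext
    show (u'.map (𝟙 x), v.map (𝟙 x)) = (𝟙 _, 𝟙 _)
    simp
  map_comp f g := by
    apply Subtype.ext
    show (u'.map _, v.map _) = (u'.map _ ≫ u'.map _, v.map _ ≫ v.map _)
    simp

end Pullback

section BaseChange

variable {A A' B B' : Type u} [SmallCategory A] [SmallCategory A']
  [SmallCategory B] [SmallCategory B']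

/-- The base-change morphism `v ∘ r' ⟶ r ∘ w` associated with a square whose vertical
edges admit right adjoints. -/
def baseChangeR {u : A ⥤ B} {u' : A' ⥤ B'} {v : A' ⥤ A} {w : B' ⥤ B}
    {r : B ⥤ A} {r' : B' ⥤ A'} (adj : u ⊣ r) (adj' : u' ⊣ r')
    (α : v ⋙ u ⟶ u' ⋙ w) : r' ⋙ v ⟶ w ⋙ r :=
  Functor.whiskerLeft (r' ⋙ v) adj.unit ≫ Functor.whiskerLeft r' (Functor.whiskerRight α r) ≫
    Functor.whiskerRight adj'.counit (w ⋙ r)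

/-- The base-change morphism `w'' ∘ u ⟶ u' ∘ v''` associated with a square whose horizontal
edges admit left adjoints. -/
def baseChangeL {u : A ⥤ B} {u' : A' ⥤ B'} {v : A' ⥤ A} {w : B' ⥤ B}
    {v'' : A ⥤ A'} {w'' : B ⥤ B'} (adjv : v'' ⊣ v) (adjw : w'' ⊣ w)
    (α : v ⋙ u ⟶ u' ⋙ w) : u ⋙ w'' ⟶ v'' ⋙ u' :=
  Functor.whiskerRight adjv.unit (u ⋙ w'') ≫ Functor.whiskerLeft v'' (Functor.whiskerRight α w'') ≫
    Functor.whiskerLeft (v'' ⋙ u') adjw.counit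

end BaseChange

section LocColoc

variable {X Y C : Type u} [SmallCategory X] [SmallCategory Y] [SmallCategory C]

/-- `F : X ⥤ Y`, viewed over `C` via `P : Y ⥤ C` (and `F ⋙ P` on `X`), is a `W`-equivalence
locally on `C`. -/
def IsLocallyEquiv (W : FunctorClass.{u}) (F : X ⥤ Y) (P : Y ⥤ C) : Prop :=
  ∀ c : C, W (triangleSlice F P c)

/-- `F : X ⥤ Y`, viewed over `C` via `P : Y ⥤ C` (and `F ⋙ P` on `X`), is a `W`-equivalence
colocally on `C`. -/
def IsColocallyEquiv (W : FunctorClass.{u}) (F : X ⥤ Y) (P : Y ⥤ C) : Prop :=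
  ∀ c : C, W (triangleCoslice F P c)

end LocColoc

/-- A square `(u, u', v, w, α)` is weakly `W`-exact. -/
def IsWeakExactSquare (W : FunctorClass.{u}) {A A' B B' : Type u} [SmallCategory A]
    [SmallCategory A'] [SmallCategory B] [SmallCategory B'] (u : A ⥤ B) (u' : A' ⥤ B')
    (v : A' ⥤ A) (w : B' ⥤ B) (α : v ⋙ u ⟶ u' ⋙ w) : Prop :=
  ∀ b' : B', IsColocallyEquiv W (squareSlice u u' v w α b') (CostructuredArrow.proj u (w.obj b'))

/-- `w : B' ⥤ B` is a discrete fibration. -/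
def IsDiscreteFibration {B' B : Type u} [SmallCategory B'] [SmallCategory B]
    (w : B' ⥤ B) : Prop :=
  ∀ (b' : B') (b : B) (g : b ⟶ w.obj b'),
    ∃! p : Σ b₀ : B', b₀ ⟶ b', ∃ h : w.obj p.1 = b, w.map p.2 = eqToHom h ≫ g

/-- The coarse fundamental localizer: functors whose source and target are both empty or
both nonempty. -/
def coarseLocalizer : FunctorClass.{u} :=
  @fun A B _ _ _ => Nonempty A ↔ Nonempty B

/-- The map induced on sets of connected components. -/
def π₀map {A B : Type u} [SmallCategory A] [SmallCategory B] (F : A ⥤ B) :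
    ConnectedComponents A → ConnectedComponents B :=
  F.mapConnectedComponents

/-- The fundamental localizer `W₀` of `0`-equivalences: functors inducing a bijection on
connected components. -/
def W₀ : FunctorClass.{u} :=
  @fun _ _ _ _ F => Function.Bijective (π₀map F)

/-- A square in `Cat`: four small categories, four functors and a `2`-cell
`α : u ∘ v ⟶ w ∘ u'`. -/
structure CatSquare : Type (u + 1) where
  {A' : Type u}
  {A : Type u}
  {B' : Type u}
  {B : Type u}
  [instA' : SmallCategory A']
  [instA : SmallCategory A]
  [instB' : SmallCategory B']
  [instB : SmallCategory B]
  u : A ⥤ B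
  u' : A' ⥤ B'
  v : A' ⥤ A
  w : B' ⥤ B
  α : v ⋙ u ⟶ u' ⋙ w

attribute [instance] CatSquare.instA' CatSquare.instA CatSquare.instB' CatSquare.instB

/-- A bundled square is `W`-exact. -/
def CatSquare.IsExact (W : FunctorClass.{u}) (S : CatSquare.{u}) : Prop :=
  IsExactSquare W S.u S.u' S.v S.w S.α

/-- The opposite of a square. -/
def CatSquare.op (S : CatSquare.{u}) : CatSquare.{u} :=
  ⟨S.w.op, S.v.op, S.u'.op, S.u.op, squareOpCell S.u S.u' S.v S.w S.α⟩

/-- The comma square associated with `u : A ⥤ B` and `w : B' ⥤ B`. -/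
def commaSquare {A B B' : Type u} [SmallCategory A] [SmallCategory B] [SmallCategory B']
    (u : A ⥤ B) (w : B' ⥤ B) : CatSquare.{u} :=
  ⟨u, Comma.snd u w, Comma.fst u w, w, Comma.natTrans u w⟩

/-- The comma square `D^g_{u, b}` of `u : A ⥤ B` at an object `b : B`. -/
def commaObjSquare {A B : Type u} [SmallCategory A] [SmallCategory B] (u : A ⥤ B) (b : B) :
    CatSquare.{u} :=
  commaSquare u (Functor.fromPUnit.{u} b)

/-- The dual comma square `D^d_{v, a}` of `v : A' ⥤ A` at an object `a : A`. -/
def commaObjSquareD {A' A : Type u} [SmallCategory A'] [SmallCategory A] (v : A' ⥤ A)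
    (a : A) : CatSquare.{u} :=
  commaSquare (Functor.fromPUnit.{u} a) v

/-- The square with top edge `F : A ⥤ B`, the canonical functors `A ⥤ e`, `B ⥤ e` as
vertical edges, identity bottom edge and identity `2`-cell. -/
def starSquare {A B : Type u} [SmallCategory A] [SmallCategory B] (F : A ⥤ B) :
    CatSquare.{u} :=
  ⟨Functor.star B, Functor.star A, F, 𝟭 (PtCat.{u}), 𝟙 (F ⋙ Functor.star B)⟩

/-- The square with all four corners of the form `(A, e, e, e)`, canonical edges and
identity `2`-cell. -/
def ptSquare (A : Type u) [SmallCategory A] : CatSquare.{u} :=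
  ⟨𝟭 (PtCat.{u}), Functor.star A, Functor.star A, 𝟭 (PtCat.{u}), 𝟙 (Functor.star A)⟩

/-- `Q` is stable under horizontal composition of squares (condition CS1h). -/
def StableHComp (Q : CatSquare.{u} → Prop) : Prop :=
  ∀ {A A' A'' B B' B'' : Type u}
    [SmallCategory A] [SmallCategory A'] [SmallCategory A'']
    [SmallCategory B] [SmallCategory B'] [SmallCategory B'']
    (u : A ⥤ B) (u' : A' ⥤ B') (u'' : A'' ⥤ B'')
    (v : A' ⥤ A) (w : B' ⥤ B) (v' : A'' ⥤ A') (w' : B'' ⥤ B')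
    (α : v ⋙ u ⟶ u' ⋙ w) (α' : v' ⋙ u' ⟶ u'' ⋙ w'),
    Q ⟨u, u', v, w, α⟩ → Q ⟨u', u'', v', w', α'⟩ →
    Q ⟨u, u'', v' ⋙ v, w' ⋙ w, hcomp2cell α α'⟩

/-- `Q` is stable under vertical composition of squares (condition CS1v). -/
def StableVComp (Q : CatSquare.{u} → Prop) : Prop :=
  ∀ {A A' B B' C C' : Type u}
    [SmallCategory A] [SmallCategory A'] [SmallCategory B] [SmallCategory B']
    [SmallCategory C] [SmallCategory C']
    (u : A ⥤ B) (u' : A' ⥤ B') (v : A' ⥤ A) (w : B' ⥤ B)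
    (x : B ⥤ C) (x' : B' ⥤ C') (y : C' ⥤ C)
    (α : v ⋙ u ⟶ u' ⋙ w) (β : w ⋙ x ⟶ x' ⋙ y),
    Q ⟨u, u', v, w, α⟩ → Q ⟨x, x', w, y, β⟩ →
    Q ⟨u ⋙ x, u' ⋙ x', v, y, vcomp2cell α β⟩

/-- `Q` satisfies horizontal descent (condition CS2h). -/
def HorizontalDescent (Q : CatSquare.{u} → Prop) : Prop :=
  ∀ {A A' B B' : Type u}
    [SmallCategory A] [SmallCategory A'] [SmallCategory B] [SmallCategory B']
    (u : A ⥤ B) (u' : A' ⥤ B') (v : A' ⥤ A) (w : B' ⥤ B) (α : v ⋙ u ⟶ u' ⋙ w)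
    (J : Type u) (Aj Bj : J → Type u)
    [∀ j, SmallCategory (Aj j)] [∀ j, SmallCategory (Bj j)]
    (uj : ∀ j, Aj j ⥤ Bj j) (vj : ∀ j, Aj j ⥤ A') (wj : ∀ j, Bj j ⥤ B')
    (αj : ∀ j, vj j ⋙ u' ⟶ uj j ⋙ wj j),
    (∀ b' : B', ∃ j, ∃ b : Bj j, (wj j).obj b = b') →
    (∀ j, Q ⟨u', uj j, vj j, wj j, αj j⟩) →
    (∀ j, Q ⟨u, uj j, vj j ⋙ v, wj j ⋙ w, hcomp2cell α (αj j)⟩) →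
    Q ⟨u, u', v, w, α⟩

/-- `Q` satisfies local descent (condition CS3h). -/
def LocalDescent (Q : CatSquare.{u} → Prop) : Prop :=
  ∀ {A A' B B' : Type u}
    [SmallCategory A] [SmallCategory A'] [SmallCategory B] [SmallCategory B']
    (u : A ⥤ B) (u' : A' ⥤ B') (v : A' ⥤ A) (w : B' ⥤ B) (α : v ⋙ u ⟶ u' ⋙ w),
    (∀ b' : B', Q ⟨u, Comma.snd u' (Functor.fromPUnit.{u} b'),
        Comma.fst u' (Functor.fromPUnit.{u} b') ⋙ v, Functor.fromPUnit.{u} b' ⋙ w,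
        hcomp2cell α (Comma.natTrans u' (Functor.fromPUnit.{u} b'))⟩) →
    Q ⟨u, u', v, w, α⟩

/-- `Q` satisfies colocal descent (condition CS3v). -/
def ColocalDescent (Q : CatSquare.{u} → Prop) : Prop :=
  ∀ {A A' B B' : Type u}
    [SmallCategory A] [SmallCategory A'] [SmallCategory B] [SmallCategory B']
    (u : A ⥤ B) (u' : A' ⥤ B') (v : A' ⥤ A) (w : B' ⥤ B) (α : v ⋙ u ⟶ u' ⋙ w),
    (∀ a : A, Q ⟨Functor.fromPUnit.{u} a ⋙ u,
        Comma.snd (Functor.fromPUnit.{u} a) v ⋙ u',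
        Comma.fst (Functor.fromPUnit.{u} a) v, w,
        vcomp2cell (Comma.natTrans (Functor.fromPUnit.{u} a) v) α⟩) →
    Q ⟨u, u', v, w, α⟩

/-- `Q` is stable under passing to opposite squares (condition CS4). -/
def OpStable (Q : CatSquare.{u} → Prop) : Prop :=
  ∀ S : CatSquare.{u}, Q S → Q S.op

/-- Isomorphism of squares. -/
def CatSquare.Isomorphic (S T : CatSquare.{u}) : Prop :=
  ∃ (eA' : S.A' ⥤ T.A') (eA : S.A ⥤ T.A) (eB' : S.B' ⥤ T.B') (eB : S.B ⥤ T.B)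
    (_ : IsCatIso eA') (_ : IsCatIso eA) (_ : IsCatIso eB') (_ : IsCatIso eB)
    (hv : S.v ⋙ eA = eA' ⋙ T.v) (hu : S.u ⋙ eB = eA ⋙ T.u)
    (hu' : S.u' ⋙ eB' = eA' ⋙ T.u') (hw : S.w ⋙ eB = eB' ⋙ T.w),
    Functor.whiskerRight S.α eB =
      eqToHom (by rw [Functor.assoc, hu, ← Functor.assoc, hv, Functor.assoc]) ≫
        Functor.whiskerLeft eA' T.α ≫
        eqToHom (by rw [← Functor.assoc, ← hu', Functor.assoc, ← hw, ← Functor.assoc])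

/-- A bundled square is a right Beck–Chevalley square. -/
def CatSquare.IsRightBC (S : CatSquare.{u}) : Prop :=
  ∃ (v'' : S.A ⥤ S.A') (w'' : S.B ⥤ S.B') (adjv : v'' ⊣ S.v) (adjw : w'' ⊣ S.w),
    IsIso (baseChangeL adjv adjw S.α)

/-- The functor `A/b ⥤ B/b` induced by `u : A ⥤ B`, in terms of comma categories. -/
def commaSliceInduced {A B : Type u} [SmallCategory A] [SmallCategory B] (u : A ⥤ B)
    (b : B) : Comma u (Functor.fromPUnit.{u} b) ⥤ Comma (𝟭 B) (Functor.fromPUnit.{u} b) where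
  obj x := { left := u.obj x.left, right := x.right, hom := x.hom }
  map {x y} f := { left := u.map f.left, right := f.right, w := by simp [f.w] }

/-- The cartesian square expressing `A/b` as the pullback of `u : A ⥤ B` along the
forgetful functor `B/b ⥤ B`. -/
def sliceCartSquare {A B : Type u} [SmallCategory A] [SmallCategory B] (u : A ⥤ B)
    (b : B) : CatSquare.{u} :=
  ⟨u, commaSliceInduced u b, Comma.fst u (Functor.fromPUnit.{u} b),
    Comma.fst (𝟭 B) (Functor.fromPUnit.{u} b),
    𝟙 (Comma.fst u (Functor.fromPUnit.{u} b) ⋙ u)⟩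



section Basics

theorem star_comp_eq {A B : Type u} [SmallCategory A] [SmallCategory B] (F : A ⥤ B) :
    F ⋙ Functor.star B = Functor.star A := Functor.punit_ext' _ _

theorem mem_of_asp (hW : IsWeakFundamentalLocalizer W) {A B : Type u} [SmallCategory A]
    [SmallCategory B] (F : A ⥤ B)
    (hA : IsAsphericalCat W A) (hB : IsAsphericalCat W B) : W F :=
  hW.of_comp_right F (Functor.star B) hB (by rw [star_comp_eq]; exact hA)

theorem asp_of_isTerminal (hW : IsWeakFundamentalLocalizer W) {A : Type u} [SmallCategory A]
    {t : A} (h : Limits.IsTerminal t) : IsAsphericalCat W A :=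
  hW.star_mem A h.hasTerminal

theorem asp_of_w (hW : IsWeakFundamentalLocalizer W) {A B : Type u} [SmallCategory A]
    [SmallCategory B] (F : A ⥤ B)
    (hF : W F) (hB : IsAsphericalCat W B) : IsAsphericalCat W A := by
  have := hW.comp_mem F (Functor.star B) hF hB
  rwa [star_comp_eq] at this

theorem mem_of_slices_asp (hW : IsWeakFundamentalLocalizer W) {A B : Type u} [SmallCategory A]
    [SmallCategory B] (F : A ⥤ B)
    (h : ∀ b : B, IsAsphericalCat W (CostructuredArrow F b)) : W F :=
  hW.mem_of_slices F fun b =>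
    mem_of_asp hW _ (h b) (asp_of_isTerminal hW Over.mkIdTerminal)

theorem iso_mem (hW : IsWeakFundamentalLocalizer W) {C D : Type u} [SmallCategory C]
    [SmallCategory D] (P : C ⥤ D) (Q : D ⥤ C)
    (h1 : P ⋙ Q = 𝟭 C) (h2 : Q ⋙ P = 𝟭 D) : W P :=
  hW.retract_mem Q P h2 (by rw [h1]; exact hW.id_mem C)

end Basics

/-! ### The interval and homotopy invariance -/

inductive II : Type u where
  | z : II
  | o : II

instance : Preorder II.{u} where
  le i j := i = II.o → j = II.o
  le_refl i h := h
  le_trans i j k h h' hi := h' (h hi)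

theorem IIle {i j : II.{u}} (f : i ⟶ j) : i ≤ j := leOfHom f


def hobj {A B : Type u} [SmallCategory A] [SmallCategory B] (F G : A ⥤ B) (i : II.{u})
    (a : A) : B :=
  match i with
  | II.z => F.obj a
  | II.o => G.obj a

def hmap {A B : Type u} [SmallCategory A] [SmallCategory B] (F G : A ⥤ B) (τ : F ⟶ G) :
    ∀ (i j : II.{u}), i ≤ j → ∀ {a a' : A} (_ : a ⟶ a'), hobj F G i a ⟶ hobj F G j a'
  | II.z, II.z, _, _, _, f => F.map f
  | II.z, II.o, _, _, a', f => F.map f ≫ τ.app a'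
  | II.o, II.o, _, _, _, f => G.map f
  | II.o, II.z, h, _, _, _ => absurd (h rfl) (by simp)

def homotopyH {A B : Type u} [SmallCategory A] [SmallCategory B] (F G : A ⥤ B)
    (τ : F ⟶ G) : A × II.{u} ⥤ B where
  obj x := hobj F G x.2 x.1
  map {x y} f := hmap F G τ x.2 y.2 (IIle f.2) f.1
  map_id x := by
    obtain ⟨a, i⟩ := x
    cases i <;> simp [hmap, hobj]
  map_comp {x y z} f g := by
    obtain ⟨a, i⟩ := x; obtain ⟨b, j⟩ := y; obtain ⟨c, k⟩ := z
    have hij : i ≤ j := IIle f.2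
    have hjk : j ≤ k := IIle g.2
    cases i <;> cases j <;> cases k <;>
      first
        | (exfalso; exact II.noConfusion (hij rfl))
        | (exfalso; exact II.noConfusion (hjk rfl))
        | simp [hmap, hobj]
        | (simp [hmap, hobj]; exact (τ.naturality _).symm)

def prA (A : Type u) [SmallCategory A] : A × II.{u} ⥤ A where
  obj x := x.1
  map f := f.1

def secA (A : Type u) [SmallCategory A] (i : II.{u}) : A ⥤ A × II.{u} where
  obj a := (a, i)
  map f := (f, 𝟙 i)

theorem secA_prA (A : Type u) [SmallCategory A] (i : II.{u}) : secA A i ⋙ prA A = 𝟭 A := rfl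

theorem prA_mem (hW : IsWeakFundamentalLocalizer W) (A : Type u) [SmallCategory A] :
    W (prA A) := by
  refine mem_of_slices_asp hW _ fun a => ?_
  refine asp_of_isTerminal hW (t := CostructuredArrow.mk (Y := (a, II.o)) (𝟙 a)) ?_
  refine Limits.IsTerminal.ofUniqueHom
    (fun X => CostructuredArrow.homMk (X.hom, homOfLE fun h => rfl) (by simp [prA])) ?_
  intro X m
  have hw := CostructuredArrow.w m
  apply CostructuredArrow.hom_ext
  have h1 : m.left.1 = X.hom := by simpa [prA] using hw
  ext
  · exact h1
  · exact Subsingleton.elim _ _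

theorem secA_mem (hW : IsWeakFundamentalLocalizer W) (A : Type u) [SmallCategory A]
    (i : II.{u}) : W (secA A i) :=
  hW.of_comp_right _ _ (prA_mem hW A) (by rw [secA_prA]; exact hW.id_mem A)

theorem secA_comp_H_z {A B : Type u} [SmallCategory A] [SmallCategory B] (F G : A ⥤ B)
    (τ : F ⟶ G) : secA A II.z ⋙ homotopyH F G τ = F := rfl

theorem secA_comp_H_o {A B : Type u} [SmallCategory A] [SmallCategory B] (F G : A ⥤ B)
    (τ : F ⟶ G) : secA A II.o ⋙ homotopyH F G τ = G := rfl

/-- Homotopy invariance: naturally transformed functors are `W`-equivalent. -/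
theorem w_iff_of_natTrans (hW : IsWeakFundamentalLocalizer W) {A B : Type u} [SmallCategory A]
    [SmallCategory B] {F G : A ⥤ B} (τ : F ⟶ G) : W F ↔ W G := by
  have hz := secA_mem hW A II.z
  have ho := secA_mem hW A II.o
  constructor
  · intro hF
    have hH : W (homotopyH F G τ) :=
      hW.of_comp_left _ _ hz (by rw [secA_comp_H_z]; exact hF)
    have := hW.comp_mem _ _ ho hH
    rwa [secA_comp_H_o] at this
  · intro hG
    have hH : W (homotopyH F G τ) :=
      hW.of_comp_left _ _ ho (by rw [secA_comp_H_o]; exact hG)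
    have := hW.comp_mem _ _ hz hH
    rwa [secA_comp_H_z] at this

theorem const_eq_star_comp {C : Type u} [SmallCategory C] (c₀ : C) :
    (Functor.const C).obj c₀ = Functor.star C ⋙ Functor.fromPUnit.{u} c₀ := by
  refine CategoryTheory.Functor.ext (fun x => rfl) ?_
  intro x y f
  simp [Functor.fromPUnit]

/-- The cone lemma : if the identity and a constant functor both map to a common
endofunctor, the category is aspherical. -/
theorem asp_of_cone (hW : IsWeakFundamentalLocalizer W) {C : Type u} [SmallCategory C]
    (T : C ⥤ C) (τ : 𝟭 C ⟶ T) (c₀ : C) (σ : (Functor.const C).obj c₀ ⟶ T) :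
    IsAsphericalCat W C := by
  have hT : W T := (w_iff_of_natTrans hW τ).1 (hW.id_mem C)
  have hconst : W ((Functor.const C).obj c₀) := (w_iff_of_natTrans hW σ).2 hT
  refine hW.retract_mem (Functor.fromPUnit.{u} c₀) (Functor.star C)
    (Functor.punit_ext' _ _) ?_
  rw [← const_eq_star_comp]
  exact hconst

/-- Transfer of asphericity along a retraction-up-to-homotopy. -/
theorem asp_of_retract (hW : IsWeakFundamentalLocalizer W) {C D : Type u} [SmallCategory C]
    [SmallCategory D] (P : C ⥤ D) (Q : D ⥤ C) (h : Q ⋙ P = 𝟭 D)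
    (θ : 𝟭 C ⟶ P ⋙ Q) (hD : IsAsphericalCat W D) : IsAsphericalCat W C := by
  have hPQ : W (P ⋙ Q) := (w_iff_of_natTrans hW θ).1 (hW.id_mem C)
  have hP : W P := hW.retract_mem Q P h hPQ
  exact asp_of_w hW P hP hD

/-! ### The twisted arrow category and stability of `W` under `op`. -/

structure Tw (A : Type u) [SmallCategory A] : Type u where
  x : A
  y : A
  f : x ⟶ y

@[ext]
structure TwHom {A : Type u} [SmallCategory A] (T₁ T₂ : Tw A) : Type u where
  gx : T₂.x ⟶ T₁.x
  gy : T₁.y ⟶ T₂.y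
  w : gx ≫ T₁.f ≫ gy = T₂.f

instance {A : Type u} [SmallCategory A] : SmallCategory (Tw A) where
  Hom := TwHom
  id T := ⟨𝟙 T.x, 𝟙 T.y, by simp⟩
  comp {T₁ T₂ T₃} p q := ⟨q.gx ≫ p.gx, p.gy ≫ q.gy, by
    have hp := p.w; have hq := q.w
    rw [← hq, ← hp]; simp⟩
  id_comp f := by apply TwHom.ext <;> simp
  comp_id f := by apply TwHom.ext <;> simp
  assoc f g h := by apply TwHom.ext <;> simp

section TwLemmas

variable {A : Type u} [SmallCategory A]

@[simp] theorem Tw.id_gx (T : Tw A) : (𝟙 T : TwHom T T).gx = 𝟙 T.x := rfl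
@[simp] theorem Tw.id_gy (T : Tw A) : (𝟙 T : TwHom T T).gy = 𝟙 T.y := rfl
@[simp] theorem Tw.comp_gx {T₁ T₂ T₃ : Tw A} (p : T₁ ⟶ T₂) (q : T₂ ⟶ T₃) :
    (p ≫ q).gx = q.gx ≫ p.gx := rfl
@[simp] theorem Tw.comp_gy {T₁ T₂ T₃ : Tw A} (p : T₁ ⟶ T₂) (q : T₂ ⟶ T₃) :
    (p ≫ q).gy = p.gy ≫ q.gy := rfl

theorem Tw.hom_ext {T₁ T₂ : Tw A} {p q : T₁ ⟶ T₂} (h1 : p.gx = q.gx) (h2 : p.gy = q.gy) :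
    p = q := TwHom.ext h1 h2

end TwLemmas

def twCod (A : Type u) [SmallCategory A] : Tw A ⥤ A where
  obj T := T.y
  map p := p.gy

def twDom (A : Type u) [SmallCategory A] : Tw A ⥤ Aᵒᵖ where
  obj T := Opposite.op T.x
  map p := (p.gx).op

attribute [reducible] twCod twDom

section TwLemmas2
variable {A : Type u} [SmallCategory A]
@[simp] theorem twCod_obj (T : Tw A) : (twCod A).obj T = T.y := rfl
@[simp] theorem twCod_map {T₁ T₂ : Tw A} (p : T₁ ⟶ T₂) : (twCod A).map p = p.gy := rfl
@[simp] theorem twDom_obj (T : Tw A) : (twDom A).obj T = Opposite.op T.x := rfl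
@[simp] theorem twDom_map {T₁ T₂ : Tw A} (p : T₁ ⟶ T₂) : (twDom A).map p = (p.gx).op := rfl
end TwLemmas2

def twMap {A B : Type u} [SmallCategory A] [SmallCategory B] (u : A ⥤ B) : Tw A ⥤ Tw B where
  obj T := ⟨u.obj T.x, u.obj T.y, u.map T.f⟩
  map {T₁ T₂} p := ⟨u.map p.gx, u.map p.gy, by
    rw [← u.map_comp, ← u.map_comp, p.w]⟩
  map_id T := by apply Tw.hom_ext <;> simp
  map_comp p q := by apply Tw.hom_ext <;> simp

theorem twMap_cod {A B : Type u} [SmallCategory A] [SmallCategory B] (u : A ⥤ B) :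
    twMap u ⋙ twCod B = twCod A ⋙ u := rfl

theorem twMap_dom {A B : Type u} [SmallCategory A] [SmallCategory B] (u : A ⥤ B) :
    twMap u ⋙ twDom B = twDom A ⋙ u.op := rfl

section TwSlices

variable {A : Type u} [SmallCategory A]

/-- Cone endofunctor on the slice `Tw A / a`. -/
def twCodCone (a : A) : CostructuredArrow (twCod A) a ⥤ CostructuredArrow (twCod A) a where
  obj X := CostructuredArrow.mk (Y := (⟨X.left.x, a, X.left.f ≫ X.hom⟩ : Tw A)) (𝟙 a)
  map {X Y} m := CostructuredArrow.homMk
    (TwHom.mk m.left.gx (𝟙 a) (by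
      have hw := CostructuredArrow.w m
      have hm := m.left.w
      simp only [twCod_map] at hw
      show m.left.gx ≫ (X.left.f ≫ X.hom) ≫ 𝟙 a = Y.left.f ≫ Y.hom
      have hc : m.left.gx ≫ (X.left.f ≫ X.hom) ≫ 𝟙 a = m.left.gx ≫ X.left.f ≫ X.hom := by
        simp
      rw [hc, ← hw]
      simp only [← Category.assoc]
      congr 1
      simpa [Category.assoc] using hm))
    (by simp)
  map_id X := by apply CostructuredArrow.hom_ext; apply Tw.hom_ext <;> simp
  map_comp m m' := by apply CostructuredArrow.hom_ext; apply Tw.hom_ext <;> simp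

theorem asp_twCod_slice (hW : IsWeakFundamentalLocalizer W) (a : A) :
    IsAsphericalCat W (CostructuredArrow (twCod A) a) := by
  refine asp_of_cone hW (twCodCone a)
    ({ app := fun X => CostructuredArrow.homMk
        (TwHom.mk (𝟙 X.left.x) X.hom (by simp [twCodCone]))
        (by simp [twCodCone])
       naturality := ?_ })
    (CostructuredArrow.mk (Y := (⟨a, a, 𝟙 a⟩ : Tw A)) (𝟙 a))
    ({ app := fun X => CostructuredArrow.homMk
        (TwHom.mk (X.left.f ≫ X.hom) (𝟙 a) (by simp [twCodCone]))
        (by simp [twCodCone])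
       naturality := ?_ })
  · intro X Y m
    apply CostructuredArrow.hom_ext
    have hw := CostructuredArrow.w m
    simp only [twCod_map] at hw
    apply Tw.hom_ext <;> simp [twCodCone, hw]
  · intro X Y m
    apply CostructuredArrow.hom_ext
    have hw := CostructuredArrow.w m
    have hm := m.left.w
    simp only [twCod_map] at hw
    apply Tw.hom_ext <;> simp [twCodCone]
    rw [← hw]
    simp only [← Category.assoc]
    congr 1
    simpa [Category.assoc] using hm.symm

/-- Cone endofunctor on the slice of the domain functor. -/
def twDomCone (a : A) :
    CostructuredArrow (twDom A) (Opposite.op a) ⥤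
      CostructuredArrow (twDom A) (Opposite.op a) where
  obj X := CostructuredArrow.mk (Y := (⟨a, X.left.y, X.hom.unop ≫ X.left.f⟩ : Tw A))
    (𝟙 (Opposite.op a))
  map {X Y} m := CostructuredArrow.homMk
    (TwHom.mk (𝟙 a) m.left.gy (by
      have hw := CostructuredArrow.w m
      have hm := m.left.w
      simp only [twDom_map] at hw
      have hw' : Y.hom.unop ≫ m.left.gx = X.hom.unop := by
        rw [← hw]; rfl
      show 𝟙 a ≫ (X.hom.unop ≫ X.left.f) ≫ m.left.gy = Y.hom.unop ≫ Y.left.f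
      rw [Category.id_comp, ← hw', Category.assoc, Category.assoc, hm]))
    (by simp)
  map_id X := by apply CostructuredArrow.hom_ext; apply Tw.hom_ext <;> simp
  map_comp m m' := by apply CostructuredArrow.hom_ext; apply Tw.hom_ext <;> simp

theorem asp_twDom_slice (hW : IsWeakFundamentalLocalizer W) (a : A) :
    IsAsphericalCat W (CostructuredArrow (twDom A) (Opposite.op a)) := by
  refine asp_of_cone hW (twDomCone a)
    ({ app := fun X => CostructuredArrow.homMk
        (TwHom.mk X.hom.unop (𝟙 X.left.y) (by simp [twDomCone]))
        (by simp [twDomCone])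
       naturality := ?_ })
    (CostructuredArrow.mk (Y := (⟨a, a, 𝟙 a⟩ : Tw A)) (𝟙 (Opposite.op a)))
    ({ app := fun X => CostructuredArrow.homMk
        (TwHom.mk (𝟙 a) (X.hom.unop ≫ X.left.f) (by simp [twDomCone]))
        (by simp [twDomCone])
       naturality := ?_ })
  · intro X Y m
    apply CostructuredArrow.hom_ext
    have hw := CostructuredArrow.w m
    simp only [twDom_map] at hw
    have hw' : Y.hom.unop ≫ m.left.gx = X.hom.unop := by rw [← hw]; rfl
    apply Tw.hom_ext <;> simp [twDomCone, hw']
  · intro X Y m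
    apply CostructuredArrow.hom_ext
    have hw := CostructuredArrow.w m
    have hm := m.left.w
    simp only [twDom_map] at hw
    have hw' : Y.hom.unop ≫ m.left.gx = X.hom.unop := by rw [← hw]; rfl
    apply Tw.hom_ext <;> simp [twDomCone]
    rw [← hw']
    have hgoal : Y.hom.unop ≫ Y.left.f =
        (Y.hom.unop ≫ m.left.gx) ≫ X.left.f ≫ m.left.gy := by
      rw [Category.assoc, hm]
    exact hgoal

end TwSlices

theorem twCod_mem (hW : IsWeakFundamentalLocalizer W) (A : Type u) [SmallCategory A] :
    W (twCod A) :=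
  mem_of_slices_asp hW _ fun a => asp_twCod_slice hW a

theorem twDom_mem (hW : IsWeakFundamentalLocalizer W) (A : Type u) [SmallCategory A] :
    W (twDom A) := by
  refine mem_of_slices_asp hW _ fun a => ?_
  have := asp_twDom_slice (A := A) hW a.unop
  simpa using this

/-! ### Stability of `W` under taking opposites -/

theorem w_op (hW : IsWeakFundamentalLocalizer W) {A B : Type u} [SmallCategory A]
    [SmallCategory B] (u : A ⥤ B) (h : W u) : W u.op := by
  have h1 : W (twCod A ⋙ u) := hW.comp_mem _ _ (twCod_mem hW A) h
  rw [← twMap_cod] at h1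
  have h2 : W (twMap u) := hW.of_comp_right _ _ (twCod_mem hW B) h1
  have h3 : W (twMap u ⋙ twDom B) := hW.comp_mem _ _ h2 (twDom_mem hW B)
  rw [twMap_dom] at h3
  exact hW.of_comp_left _ _ (twDom_mem hW A) h3

theorem opOp_comp_eq {A B : Type u} [SmallCategory A] [SmallCategory B] (u : A ⥤ B) :
    CategoryTheory.opOp A ⋙ u.op.op = u ⋙ CategoryTheory.opOp B := rfl

theorem w_of_op (hW : IsWeakFundamentalLocalizer W) {A B : Type u} [SmallCategory A]
    [SmallCategory B] (u : A ⥤ B) (h : W u.op) : W u := by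
  have h2 : W u.op.op := w_op hW u.op h
  have hA : W (CategoryTheory.opOp A) :=
    iso_mem hW (CategoryTheory.opOp A) (CategoryTheory.unopUnop A) rfl rfl
  have hB : W (CategoryTheory.opOp B) :=
    iso_mem hW (CategoryTheory.opOp B) (CategoryTheory.unopUnop B) rfl rfl
  have h3 : W (CategoryTheory.opOp A ⋙ u.op.op) := hW.comp_mem _ _ hA h2
  rw [opOp_comp_eq] at h3
  exact hW.of_comp_right _ _ hB h3

theorem asp_ptCat (hW : IsWeakFundamentalLocalizer W) : IsAsphericalCat W PtCat.{u} :=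
  asp_of_isTerminal hW (t := ⟨PUnit.unit⟩)
    (Limits.IsTerminal.ofUniqueHom (fun X => eqToHom (by apply Subsingleton.elim))
      (fun X m => Subsingleton.elim _ _))

theorem asp_ptCatOp (hW : IsWeakFundamentalLocalizer W) : IsAsphericalCat W (PtCat.{u}ᵒᵖ) :=
  asp_of_isTerminal hW (t := Opposite.op ⟨PUnit.unit⟩)
    (Limits.IsTerminal.ofUniqueHom
      (fun X => (eqToHom (by apply Subsingleton.elim)).op)
      (fun X m => by
        have : m.unop = (eqToHom (by apply Subsingleton.elim) :
          (⟨PUnit.unit⟩ : PtCat.{u}) ⟶ X.unop) := Subsingleton.elim _ _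
        rw [← m.op_unop, this]))

theorem asp_op (hW : IsWeakFundamentalLocalizer W) {A : Type u} [SmallCategory A]
    (h : IsAsphericalCat W A) : IsAsphericalCat W Aᵒᵖ := by
  have h1 : W (Functor.star A).op := w_op hW _ h
  have h2 : W ((Functor.star A).op ⋙ Functor.star (PtCat.{u}ᵒᵖ)) :=
    hW.comp_mem _ _ h1 (asp_ptCatOp hW)
  have e : (Functor.star A).op ⋙ Functor.star (PtCat.{u}ᵒᵖ) = Functor.star (Aᵒᵖ) :=
    Functor.punit_ext' _ _
  rwa [e] at h2

theorem asp_of_op (hW : IsWeakFundamentalLocalizer W) {A : Type u} [SmallCategory A]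
    (h : IsAsphericalCat W Aᵒᵖ) : IsAsphericalCat W A := by
  have h1 := asp_op hW h
  exact asp_of_retract hW (CategoryTheory.opOp A) (CategoryTheory.unopUnop A) rfl
    (eqToHom (rfl : 𝟭 A = CategoryTheory.opOp A ⋙ CategoryTheory.unopUnop A)) h1

/-! ### Coaspherical functors are in `W` -/

def cosOpFun {A B : Type u} [SmallCategory A] [SmallCategory B] (u : A ⥤ B) (b : B) :
    (StructuredArrow b u)ᵒᵖ ⥤ CostructuredArrow u.op (Opposite.op b) where
  obj X := CostructuredArrow.mk (Y := Opposite.op X.unop.right) (X.unop.hom.op)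
  map {X Y} m := CostructuredArrow.homMk ((m.unop.right).op) (by
    have hw := StructuredArrow.w m.unop
    show (u.map m.unop.right).op ≫ Y.unop.hom.op = X.unop.hom.op
    rw [← op_comp, hw])
  map_id X := by apply CostructuredArrow.hom_ext; simp
  map_comp m m' := by apply CostructuredArrow.hom_ext; simp

def cosOpInv {A B : Type u} [SmallCategory A] [SmallCategory B] (u : A ⥤ B) (b : B) :
    CostructuredArrow u.op (Opposite.op b) ⥤ (StructuredArrow b u)ᵒᵖ where
  obj Z := Opposite.op (StructuredArrow.mk (Y := Z.left.unop) (Z.hom.unop))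
  map {Z₁ Z₂} m := (StructuredArrow.homMk (m.left.unop) (by
    have hw := CostructuredArrow.w m
    show Z₂.hom.unop ≫ u.map m.left.unop = Z₁.hom.unop
    have := congrArg Quiver.Hom.unop hw
    simpa using this)).op
  map_id Z := by
    apply Quiver.Hom.unop_inj
    apply StructuredArrow.hom_ext
    simp
  map_comp m m' := by
    apply Quiver.Hom.unop_inj
    apply StructuredArrow.hom_ext
    simp

theorem coasp_mem (hW : IsWeakFundamentalLocalizer W) {A B : Type u} [SmallCategory A]
    [SmallCategory B] (u : A ⥤ B)
    (h : ∀ b : B, IsAsphericalCat W (StructuredArrow b u)) : W u := by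
  refine w_of_op hW u (mem_of_slices_asp hW _ fun b => ?_)
  have h1 : IsAsphericalCat W ((StructuredArrow b.unop u)ᵒᵖ) := asp_op hW (h b.unop)
  exact asp_of_retract hW (cosOpInv u b.unop) (cosOpFun u b.unop) rfl (eqToHom rfl) h1

/-! ### The fiber characterisation of exactness -/

section FiberChar

variable {A A' B B' : Type u} [SmallCategory A] [SmallCategory A']
  [SmallCategory B] [SmallCategory B']
  (u : A ⥤ B) (u' : A' ⥤ B') (v : A' ⥤ A) (w : B' ⥤ B) (α : v ⋙ u ⟶ u' ⋙ w)

@[simp] theorem squareFiber_id_val (a : A) (b' : B') (g : u.obj a ⟶ w.obj b')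
    (s : SquareFiber u u' v w α a b' g) : (𝟙 s : s ⟶ s).1 = 𝟙 s.pt := rfl

@[simp] theorem squareFiber_comp_val {a : A} {b' : B'} {g : u.obj a ⟶ w.obj b'}
    {s₁ s₂ s₃ : SquareFiber u u' v w α a b' g} (m : s₁ ⟶ s₂) (m' : s₂ ⟶ s₃) :
    (m ≫ m').1 = m.1 ≫ m'.1 := rfl

theorem squareFiber_hom_ext {a : A} {b' : B'} {g : u.obj a ⟶ w.obj b'}
    {s₁ s₂ : SquareFiber u u' v w α a b' g} {m m' : s₁ ⟶ s₂} (h : m.1 = m'.1) :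
    m = m' := Subtype.ext h

def cosliceToFiber (b' : B') (ξ : CostructuredArrow u (w.obj b')) :
    StructuredArrow ξ (squareSlice u u' v w α b') ⥤
      SquareFiber u u' v w α ξ.left b' ξ.hom where
  obj Z := ⟨Z.right.left, Z.hom.left, Z.right.hom, CostructuredArrow.w Z.hom⟩
  map {Z₁ Z₂} m := ⟨m.right.left, by
      have hw := congrArg CommaMorphism.left (StructuredArrow.w m)
      simpa [squareSlice] using hw,
    CostructuredArrow.w m.right⟩
  map_id Z := by apply squareFiber_hom_ext; simp
  map_comp m m' := by apply squareFiber_hom_ext; simp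

def fiberToCoslice' (b' : B') (ξ : CostructuredArrow u (w.obj b')) :
    SquareFiber u u' v w α ξ.left b' ξ.hom ⥤
      StructuredArrow ξ (squareSlice u u' v w α b') where
  obj s := StructuredArrow.mk (Y := CostructuredArrow.mk (Y := s.pt) s.g')
    (CostructuredArrow.homMk s.f (by simpa [squareSlice] using s.fac))
  map {s₁ s₂} m := StructuredArrow.homMk (CostructuredArrow.homMk m.1 m.2.2) (by
    apply CostructuredArrow.hom_ext
    exact m.2.1)
  map_id s := by apply StructuredArrow.hom_ext; apply CostructuredArrow.hom_ext; simp
  map_comp m m' := by apply StructuredArrow.hom_ext; apply CostructuredArrow.hom_ext; simp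

theorem exact_iff_fibers (hW : IsWeakFundamentalLocalizer W) :
    IsExactSquare W u u' v w α ↔
      ∀ (a : A) (b' : B') (g : u.obj a ⟶ w.obj b'),
        IsAsphericalCat W (SquareFiber u u' v w α a b' g) := by
  constructor
  · intro h a b' g
    have h1 := h b' (CostructuredArrow.mk g)
    exact asp_of_retract hW (fiberToCoslice' u u' v w α b' (CostructuredArrow.mk g))
      (cosliceToFiber u u' v w α b' (CostructuredArrow.mk g)) rfl (eqToHom rfl) h1
  · intro h b' ξ
    exact asp_of_retract hW (cosliceToFiber u u' v w α b' ξ)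
      (fiberToCoslice' u u' v w α b' ξ) rfl (eqToHom rfl) (h ξ.left b' ξ.hom)

end FiberChar

/-! ### Horizontal composition of exact squares -/

section HComp

variable {A A' A'' B B' B'' : Type u}
  [SmallCategory A] [SmallCategory A'] [SmallCategory A'']
  [SmallCategory B] [SmallCategory B'] [SmallCategory B'']
  (u : A ⥤ B) (u' : A' ⥤ B') (u'' : A'' ⥤ B'')
  (v : A' ⥤ A) (w : B' ⥤ B) (v' : A'' ⥤ A') (w' : B'' ⥤ B')
  (α : v ⋙ u ⟶ u' ⋙ w) (α' : v' ⋙ u' ⟶ u'' ⋙ w')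

@[simp] theorem hcomp2cell_app (pt : A'') :
    (hcomp2cell α α').app pt = α.app (v'.obj pt) ≫ w.map (α'.app pt) := rfl

variable (a : A) (b'' : B'') (g : u.obj a ⟶ (w' ⋙ w).obj b'')

/-- Comparison functor from the fiber of the horizontal composite to a fiber
of the first square. -/
def hP : SquareFiber u u'' (v' ⋙ v) (w' ⋙ w) (hcomp2cell α α') a b'' g ⥤
    SquareFiber u u' v w α a (w'.obj b'') g where
  obj s := ⟨v'.obj s.pt, s.f, α'.app s.pt ≫ w'.map s.g', by
    have hf := s.fac
    simp only [hcomp2cell_app, Functor.comp_map, Functor.map_comp, Category.assoc] at hf ⊢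
    exact hf⟩
  map {s₁ s₂} m := ⟨v'.map m.1, m.2.1, by
    have hn : u'.map (v'.map m.1) ≫ α'.app s₂.pt =
        α'.app s₁.pt ≫ w'.map (u''.map m.1) := α'.naturality m.1
    show u'.map (v'.map m.1) ≫ (α'.app s₂.pt ≫ w'.map s₂.g') = α'.app s₁.pt ≫ w'.map s₁.g'
    rw [← Category.assoc, hn, Category.assoc, ← w'.map_comp, m.2.2]⟩
  map_id s := by apply squareFiber_hom_ext; simp
  map_comp m m' := by apply squareFiber_hom_ext; simp

variable (ζ : SquareFiber u u' v w α a (w'.obj b'') g)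

/-- The coslice of `hP` under `ζ` maps to a fiber of the second square. -/
def hR : StructuredArrow ζ (hP u u' u'' v w v' w' α α' a b'' g) ⥤
    SquareFiber u' u'' v' w' α' ζ.pt b'' ζ.g' where
  obj Z := ⟨Z.right.pt, Z.hom.1, Z.right.g', Z.hom.2.2⟩
  map {Z₁ Z₂} m := ⟨m.right.1, by
      have hw := congrArg Subtype.val (StructuredArrow.w m)
      simpa [hP] using hw,
    m.right.2.2⟩
  map_id Z := by apply squareFiber_hom_ext; simp
  map_comp m m' := by apply squareFiber_hom_ext; simp

/-- Section of `hR`. -/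
def hS : SquareFiber u' u'' v' w' α' ζ.pt b'' ζ.g' ⥤
    StructuredArrow ζ (hP u u' u'' v w v' w' α α' a b'' g) where
  obj s := StructuredArrow.mk
    (Y := (⟨s.pt, ζ.f ≫ v.map s.f, s.g', by
      have hn : u.map (v.map s.f) ≫ α.app (v'.obj s.pt) =
          α.app ζ.pt ≫ w.map (u'.map s.f) := α.naturality s.f
      have hz := ζ.fac
      have hs : u'.map s.f ≫ α'.app s.pt ≫ w'.map s.g' = ζ.g' := s.fac
      rw [← hs] at hz
      simp only [Functor.map_comp, Category.assoc] at hz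
      simp only [hcomp2cell_app, Functor.map_comp, Functor.comp_map, Category.assoc]
      rw [← Category.assoc (u.map (v.map s.f)), hn, Category.assoc]
      exact hz⟩ :
      SquareFiber u u'' (v' ⋙ v) (w' ⋙ w) (hcomp2cell α α') a b'' g))
    (⟨s.f, rfl, s.fac⟩)
  map {s₁ s₂} m := StructuredArrow.homMk
    (⟨m.1, by
        show (ζ.f ≫ v.map s₁.f) ≫ (v' ⋙ v).map m.1 = ζ.f ≫ v.map s₂.f
        rw [Category.assoc]
        show ζ.f ≫ v.map s₁.f ≫ v.map (v'.map m.1) = ζ.f ≫ v.map s₂.f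
        rw [← v.map_comp, m.2.1],
      m.2.2⟩)
    (by apply squareFiber_hom_ext; simpa [hP] using m.2.1)
  map_id s := by apply StructuredArrow.hom_ext; apply squareFiber_hom_ext; simp
  map_comp m m' := by apply StructuredArrow.hom_ext; apply squareFiber_hom_ext; simp

theorem hSR : hS u u' u'' v w v' w' α α' a b'' g ζ ⋙ hR u u' u'' v w v' w' α α' a b'' g ζ =
    𝟭 _ := rfl

/-- The unit of the retraction. -/
def hTheta : 𝟭 (StructuredArrow ζ (hP u u' u'' v w v' w' α α' a b'' g)) ⟶
    hR u u' u'' v w v' w' α α' a b'' g ζ ⋙ hS u u' u'' v w v' w' α α' a b'' g ζ where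
  app Z := StructuredArrow.homMk
    (⟨𝟙 Z.right.pt, by
      show Z.right.f ≫ v.map (v'.map (𝟙 Z.right.pt)) = ζ.f ≫ v.map Z.hom.1
      rw [v'.map_id, v.map_id]
      exact (Category.comp_id _).trans (Z.hom.2.1).symm, by simp [hS, hR]⟩)
    (by
      apply squareFiber_hom_ext
      show Z.hom.1 ≫ v'.map (𝟙 Z.right.pt) = Z.hom.1
      rw [v'.map_id]
      exact Category.comp_id _)
  naturality Z₁ Z₂ m := by
    apply StructuredArrow.hom_ext
    apply squareFiber_hom_ext
    simp [hS, hR]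

theorem hcomp_exact (hW : IsWeakFundamentalLocalizer W) (hD : IsExactSquare W u u' v w α)
    (hD' : IsExactSquare W u' u'' v' w' α') :
    IsExactSquare W u u'' (v' ⋙ v) (w' ⋙ w) (hcomp2cell α α') := by
  refine (exact_iff_fibers _ _ _ _ _ hW).2 fun a b'' g => ?_
  have hT := (exact_iff_fibers u u' v w α hW).1 hD a (w'.obj b'') g
  have hPmem : W (hP u u' u'' v w v' w' α α' a b'' g) := by
    refine coasp_mem hW _ fun ζ => ?_
    have hfib := (exact_iff_fibers u' u'' v' w' α' hW).1 hD' ζ.pt b'' ζ.g'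
    exact asp_of_retract hW (hR u u' u'' v w v' w' α α' a b'' g ζ)
      (hS u u' u'' v w v' w' α α' a b'' g ζ) rfl
      (hTheta u u' u'' v w v' w' α α' a b'' g ζ) hfib
  exact asp_of_w hW _ hPmem hT

end HComp

/-! ### Duality for square fibers -/

section FibOp

variable {A A' B B' : Type u} [SmallCategory A] [SmallCategory A']
  [SmallCategory B] [SmallCategory B']
  (u : A ⥤ B) (u' : A' ⥤ B') (v : A' ⥤ A) (w : B' ⥤ B) (α : v ⋙ u ⟶ u' ⋙ w)
  (a : A) (b' : B') (g : u.obj a ⟶ w.obj b')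

def fibOpFun : (SquareFiber u u' v w α a b' g)ᵒᵖ ⥤
    SquareFiber w.op v.op u'.op u.op (squareOpCell u u' v w α)
      (Opposite.op b') (Opposite.op a) g.op where
  obj X := ⟨Opposite.op X.unop.pt, (X.unop.g').op, (X.unop.f).op, by
    apply Quiver.Hom.unop_inj
    simpa [squareOpCell] using X.unop.fac⟩
  map {X Y} m := ⟨(m.unop.1).op,
    by apply Quiver.Hom.unop_inj; simpa using m.unop.2.2,
    by apply Quiver.Hom.unop_inj; simpa using m.unop.2.1⟩
  map_id X := by apply squareFiber_hom_ext; simp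
  map_comp m m' := by apply squareFiber_hom_ext; simp

def fibOpInv : SquareFiber w.op v.op u'.op u.op (squareOpCell u u' v w α)
      (Opposite.op b') (Opposite.op a) g.op ⥤ (SquareFiber u u' v w α a b' g)ᵒᵖ where
  obj s := Opposite.op ⟨s.pt.unop, s.g'.unop, s.f.unop, by
    apply Quiver.Hom.op_inj
    simpa [squareOpCell] using s.fac⟩
  map {s₁ s₂} m := Quiver.Hom.op
    (⟨m.1.unop,
      by apply Quiver.Hom.op_inj; simpa using m.2.2,
      by apply Quiver.Hom.op_inj; simpa using m.2.1⟩ :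
      (⟨s₂.pt.unop, s₂.g'.unop, s₂.f.unop, _⟩ : SquareFiber u u' v w α a b' g) ⟶
        ⟨s₁.pt.unop, s₁.g'.unop, s₁.f.unop, _⟩)
  map_id s := by
    apply Quiver.Hom.unop_inj
    apply squareFiber_hom_ext
    simp
  map_comp m m' := by
    apply Quiver.Hom.unop_inj
    apply squareFiber_hom_ext
    simp

theorem fiber_op_asp_iff (hW : IsWeakFundamentalLocalizer W) :
    IsAsphericalCat W (SquareFiber u u' v w α a b' g) ↔
      IsAsphericalCat W (SquareFiber w.op v.op u'.op u.op (squareOpCell u u' v w α)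
        (Opposite.op b') (Opposite.op a) g.op) := by
  constructor
  · intro h
    exact asp_of_retract hW (fibOpInv u u' v w α a b' g) (fibOpFun u u' v w α a b' g)
      rfl (eqToHom rfl) (asp_op hW h)
  · intro h
    have h1 : IsAsphericalCat W ((SquareFiber u u' v w α a b' g)ᵒᵖ) :=
      asp_of_retract hW (fibOpFun u u' v w α a b' g) (fibOpInv u u' v w α a b' g)
        rfl (eqToHom rfl) h
    exact asp_of_op hW h1

end FibOp

/-! ### Vertical composition of exact squares -/

section VComp

variable {A A' B B' C C' : Type u}
  [SmallCategory A] [SmallCategory A'] [SmallCategory B] [SmallCategory B']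
  [SmallCategory C] [SmallCategory C']
  (u : A ⥤ B) (u' : A' ⥤ B') (v : A' ⥤ A) (w : B' ⥤ B)
  (x : B ⥤ C) (x' : B' ⥤ C') (y : C' ⥤ C)
  (α : v ⋙ u ⟶ u' ⋙ w) (β : w ⋙ x ⟶ x' ⋙ y)

theorem exact_op (hW : IsWeakFundamentalLocalizer W) (hD : IsExactSquare W u u' v w α) :
    IsExactSquare W w.op v.op u'.op u.op (squareOpCell u u' v w α) := by
  refine (exact_iff_fibers _ _ _ _ _ hW).2 fun a₀ b₀' g₀ => ?_
  exact (fiber_op_asp_iff u u' v w α b₀'.unop a₀.unop g₀.unop hW).1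
    ((exact_iff_fibers u u' v w α hW).1 hD b₀'.unop a₀.unop g₀.unop)

theorem vcell_op_eq :
    squareOpCell (u ⋙ x) (u' ⋙ x') v y (vcomp2cell α β) =
      hcomp2cell (squareOpCell x x' w y β) (squareOpCell u u' v w α) := by
  apply NatTrans.ext
  funext pt
  simp [squareOpCell, vcomp2cell, hcomp2cell, op_comp]

theorem vcomp_exact (hW : IsWeakFundamentalLocalizer W) (hD : IsExactSquare W u u' v w α)
    (hE : IsExactSquare W x x' w y β) :
    IsExactSquare W (u ⋙ x) (u' ⋙ x') v y (vcomp2cell α β) := by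
  have hDop := exact_op u u' v w α hW hD
  have hEop := exact_op x x' w y β hW hE
  have hH := hcomp_exact y.op w.op v.op x'.op x.op u'.op u.op
    (squareOpCell x x' w y β) (squareOpCell u u' v w α) hW hEop hDop
  refine (exact_iff_fibers _ _ _ _ _ hW).2 fun m c' g => ?_
  have h2 := (exact_iff_fibers _ _ _ _ _ hW).1 hH (Opposite.op c') (Opposite.op m) g.op
  refine (fiber_op_asp_iff (u ⋙ x) (u' ⋙ x') v y (vcomp2cell α β) m c' g hW).2 ?_
  rw [vcell_op_eq]
  exact h2

end VComp


theorem statement2 (W : FunctorClass.{u}) (hW : IsWeakFundamentalLocalizer W) :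
    (∀ {A A' A'' B B' B'' : Type u}
      [SmallCategory A] [SmallCategory A'] [SmallCategory A'']
      [SmallCategory B] [SmallCategory B'] [SmallCategory B'']
      (u : A ⥤ B) (u' : A' ⥤ B') (u'' : A'' ⥤ B'')
      (v : A' ⥤ A) (w : B' ⥤ B) (v' : A'' ⥤ A') (w' : B'' ⥤ B')
      (α : v ⋙ u ⟶ u' ⋙ w) (α' : v' ⋙ u' ⟶ u'' ⋙ w'),
      IsExactSquare W u u' v w α → IsExactSquare W u' u'' v' w' α' →
      IsExactSquare W u u'' (v' ⋙ v) (w' ⋙ w) (hcomp2cell α α'))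
    ∧ (∀ {A A' B B' C C' : Type u}
      [SmallCategory A] [SmallCategory A'] [SmallCategory B] [SmallCategory B']
      [SmallCategory C] [SmallCategory C']
      (u : A ⥤ B) (u' : A' ⥤ B') (v : A' ⥤ A) (w : B' ⥤ B)
      (x : B ⥤ C) (x' : B' ⥤ C') (y : C' ⥤ C)
      (α : v ⋙ u ⟶ u' ⋙ w) (β : w ⋙ x ⟶ x' ⋙ y),
      IsExactSquare W u u' v w α → IsExactSquare W x x' w y β →
      IsExactSquare W (u ⋙ x) (u' ⋙ x') v y (vcomp2cell α β)) := by
  constructor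
  · intro A A' A'' B B' B'' _ _ _ _ _ _ u u' u'' v w v' w' α α' hD hD'
    exact hcomp_exact u u' u'' v w v' w' α α' hW hD hD'
  · intro A A' B B' C C' _ _ _ _ _ _ u u' v w x x' y α β hD hE
    exact vcomp_exact u u' v w x x' y α β hW hD hE

end Paper
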